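/- There exist permutations σ₁, σ₂, σ₃ of {1, …, 30} such that σ₁ ∘ σ₂ ∘ σ₃ = id, the subgroup generated by σ₁, σ₂, σ₃ acts transitively on {1, …, 30}, and the multisets of orbit sizes of the cyclic groups generated by σ₁, σ₂, σ₃ are, respectively, {11,6,6,1,1,1,1,1,1,1}, {11,5,4,4,2,2,2}, and {7,6,4,4,4,3,2}. -/

import Mathlib

/-- The number of orbits of the cyclic group generated by a permutation `σ`
(i.e., the number of cycles of `σ`, counting fixed points as cycles of length 1). -/
noncomputable def cycleCount {α : Type*} [Finite α] (σ : Equiv.Perm α) : ℕ :=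
  Nat.card (MulAction.orbitRel.Quotient (Subgroup.zpowers σ) α)

/-- The multiset of sizes of the orbits of the cyclic group generated by a permutation `σ`
(i.e., the cycle type of `σ`, with fixed points contributing parts equal to 1). -/
noncomputable def orbitSizes {α : Type*} [Finite α] (σ : Equiv.Perm α) : Multiset ℕ :=
  letI := Fintype.ofFinite (MulAction.orbitRel.Quotient (Subgroup.zpowers σ) α)
  (Finset.univ : Finset (MulAction.orbitRel.Quotient (Subgroup.zpowers σ) α)).val.map
    fun q => Nat.card q.orbit

section Aux

variable {α : Type*} [Fintype α] [LinearOrder α]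

/-- The orbit of `x` under powers of `σ`, as a computable finset. -/
def pOrb (σ : Equiv.Perm α) (x : α) : Finset α :=
  (Finset.range (Fintype.card α + 2)).image fun n => (σ ^ n) x

lemma orbit_eq_pOrb (σ : Equiv.Perm α) (x : α) :
    MulAction.orbit (Subgroup.zpowers σ) x = ↑(pOrb σ x) := by
  classical
  ext y
  constructor
  · rintro ⟨⟨g, hg⟩, rfl⟩
    obtain ⟨k, rfl⟩ := Subgroup.mem_zpowers_iff.mp hg
    have hsc : σ.SameCycle x ((σ ^ k : Equiv.Perm α) x) := ⟨k, rfl⟩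
    obtain ⟨i, -, hi, hix⟩ := hsc.exists_pow_eq σ
    have hc := Finset.card_le_univ (σ.cycleOf x).support
    exact Finset.mem_coe.mpr (Finset.mem_image.mpr ⟨i, Finset.mem_range.mpr (by omega), hix⟩)
  · intro hy
    obtain ⟨n, -, rfl⟩ := Finset.mem_image.mp (Finset.mem_coe.mp hy)
    exact ⟨⟨σ ^ n, Subgroup.mem_zpowers_iff.mpr ⟨(n : ℤ), by simp [zpow_natCast]⟩⟩, rfl⟩

lemma mem_pOrb_self (σ : Equiv.Perm α) (x : α) : x ∈ pOrb σ x := by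
  exact Finset.mem_image.mpr ⟨0, Finset.mem_range.mpr (by omega), by simp⟩

lemma pOrb_nonempty (σ : Equiv.Perm α) (x : α) : (pOrb σ x).Nonempty :=
  ⟨x, mem_pOrb_self σ x⟩

lemma pOrb_eq_of_orbit_eq {σ : Equiv.Perm α} {x y : α}
    (h : MulAction.orbit (Subgroup.zpowers σ) x = MulAction.orbit (Subgroup.zpowers σ) y) :
    pOrb σ x = pOrb σ y := by
  have := h
  rw [orbit_eq_pOrb, orbit_eq_pOrb] at this
  exact_mod_cast Finset.coe_injective this

lemma orbitSizes_eq_pOrb (σ : Equiv.Perm α) :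
    orbitSizes σ = ((Finset.univ.filter fun x : α => ∀ y ∈ pOrb σ x, x ≤ y).val).map
      fun x => (pOrb σ x).card := by
  classical
  letI F := Fintype.ofFinite (MulAction.orbitRel.Quotient (Subgroup.zpowers σ) α)
  set Q := MulAction.orbitRel.Quotient (Subgroup.zpowers σ) α with hQ
  set t : Finset α := Finset.univ.filter fun x : α => ∀ y ∈ pOrb σ x, x ≤ y with ht
  have horbeq : ∀ x y : α, Quotient.mk'' x = (Quotient.mk'' y : Q) ↔
      MulAction.orbit (Subgroup.zpowers σ) x = MulAction.orbit (Subgroup.zpowers σ) y := by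
    intro x y
    rw [Quotient.eq'']
    constructor
    · intro h
      exact MulAction.orbit_eq_iff.mpr h
    · intro h
      have : x ∈ MulAction.orbit (Subgroup.zpowers σ) y := by
        rw [← h]; exact MulAction.mem_orbit_self x
      exact this
  -- the canonical representatives map bijectively onto the quotient
  have hinj : Set.InjOn (fun x : α => (Quotient.mk'' x : Q)) ↑t := by
    intro x hx y hy hxy
    simp only [ht, Finset.coe_filter, Set.mem_setOf_eq] at hx hy
    have horb := (horbeq x y).mp hxy
    have hpe := pOrb_eq_of_orbit_eq (σ := σ) horb
    have h1 : x ≤ y := hx.2 y (by rw [hpe]; exact mem_pOrb_self σ y)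
    have h2 : y ≤ x := hy.2 x (by rw [← hpe]; exact mem_pOrb_self σ x)
    exact le_antisymm h1 h2
  have hsurj : t.image (fun x : α => (Quotient.mk'' x : Q)) = Finset.univ := by
    apply Finset.eq_univ_of_forall
    intro q
    obtain ⟨z, hz⟩ := Quotient.exists_rep q
    have hzq : (Quotient.mk'' z : Q) = q := hz
    set m := (pOrb σ z).min' (pOrb_nonempty σ z) with hm
    have hmz : m ∈ pOrb σ z := Finset.min'_mem _ _
    have hmorb : m ∈ MulAction.orbit (Subgroup.zpowers σ) z := by
      rw [orbit_eq_pOrb]; exact_mod_cast hmz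
    have hme : (Quotient.mk'' m : Q) = Quotient.mk'' z := by
      rw [horbeq]
      exact MulAction.orbit_eq_iff.mpr hmorb
    have hpe : pOrb σ m = pOrb σ z :=
      pOrb_eq_of_orbit_eq ((horbeq m z).mp hme)
    refine Finset.mem_image.mpr ⟨m, ?_, by rw [hme, hzq]⟩
    rw [ht, Finset.mem_filter]
    refine ⟨Finset.mem_univ m, fun y hy => ?_⟩
    rw [hpe] at hy
    exact Finset.min'_le _ _ hy
  have key : ∀ (inst : Fintype Q), (@Finset.univ Q inst).val.map
      (fun q : Q => Nat.card q.orbit) = t.val.map fun x => (pOrb σ x).card := by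
    intro inst
    have huniv : (@Finset.univ Q inst).val = t.val.map fun x => (Quotient.mk'' x : Q) := by
      have : (@Finset.univ Q inst) = t.image (fun x : α => (Quotient.mk'' x : Q)) := by
        rw [hsurj]
        congr 1
        exact Subsingleton.elim _ _
      rw [this, Finset.image_val_of_injOn hinj]
    rw [huniv, Multiset.map_map]
    apply Multiset.map_congr rfl
    intro x _
    simp only [Function.comp_apply]
    have : MulAction.orbitRel.Quotient.orbit (Quotient.mk'' x : Q) =
        MulAction.orbit (Subgroup.zpowers σ) x :=
      MulAction.orbitRel.Quotient.orbit_mk x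
    rw [this, orbit_eq_pOrb]; exact Nat.card_eq_finsetCard _
  unfold orbitSizes
  exact key _

end Aux

def v1 : Fin 30 → Fin 30 :=
  ![6, 2, 12, 23, 27, 5, 19, 1, 8, 14, 20, 7, 24, 3, 17, 15, 16, 22, 18, 13, 25, 10, 0, 29, 11, 4, 26, 21, 28, 9]

def w1 : Fin 30 → Fin 30 :=
  ![22, 7, 1, 13, 25, 5, 0, 11, 8, 29, 21, 24, 2, 19, 9, 15, 16, 14, 18, 6, 10, 27, 17, 3, 12, 20, 26, 4, 28, 23]

def v2 : Fin 30 → Fin 30 :=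
  ![11, 6, 7, 10, 21, 29, 1, 17, 20, 2, 4, 15, 23, 27, 8, 25, 0, 24, 16, 12, 13, 3, 28, 26, 18, 9, 19, 14, 22, 5]

def w2 : Fin 30 → Fin 30 :=
  ![16, 6, 9, 21, 10, 29, 1, 2, 14, 25, 3, 0, 19, 20, 27, 11, 18, 7, 24, 26, 8, 4, 28, 12, 17, 15, 23, 13, 22, 5]

def v3 : Fin 30 → Fin 30 :=
  ![28, 2, 6, 20, 15, 29, 16, 0, 14, 5, 4, 17, 9, 26, 25, 11, 18, 27, 24, 1, 3, 13, 7, 21, 19, 8, 23, 10, 22, 12]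

def w3 : Fin 30 → Fin 30 :=
  ![7, 19, 1, 20, 10, 9, 2, 22, 25, 12, 27, 15, 29, 21, 8, 4, 6, 11, 16, 24, 3, 23, 28, 26, 18, 14, 13, 17, 0, 5]

def p1 : Equiv.Perm (Fin 30) := ⟨v1, w1, by decide, by decide⟩
def p2 : Equiv.Perm (Fin 30) := ⟨v2, w2, by decide, by decide⟩
def p3 : Equiv.Perm (Fin 30) := ⟨v3, w3, by decide, by decide⟩

set_option maxRecDepth 40000 in
/-- Realizability of the degree-30 branch-data triple
`[11, 6, 6, 1, 1, 1, 1, 1, 1, 1]`, `[11, 5, 4, 4, 2, 2, 2]`, `[7, 6, 4, 4, 4, 3, 2]`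
by a transitive permutation triple with product the identity. -/
theorem realizable_triple_14 :
    ∃ σ₁ σ₂ σ₃ : Equiv.Perm (Fin 30),
      σ₁ * σ₂ * σ₃ = 1 ∧
      (∀ x y : Fin 30,
        ∃ g ∈ Subgroup.closure ({σ₁, σ₂, σ₃} : Set (Equiv.Perm (Fin 30))), g x = y) ∧
      orbitSizes σ₁ = ({11, 6, 6, 1, 1, 1, 1, 1, 1, 1} : Multiset ℕ) ∧
      orbitSizes σ₂ = ({11, 5, 4, 4, 2, 2, 2} : Multiset ℕ) ∧
      orbitSizes σ₃ = ({7, 6, 4, 4, 4, 3, 2} : Multiset ℕ) := by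
  refine ⟨p1, p2, p3, ?_, ?_, ?_, ?_, ?_⟩
  · apply Equiv.ext
    decide
  · -- transitivity
    have h1 : p1 ∈ Subgroup.closure ({p1, p2, p3} : Set (Equiv.Perm (Fin 30))) :=
      Subgroup.subset_closure (by simp)
    have h2 : p2 ∈ Subgroup.closure ({p1, p2, p3} : Set (Equiv.Perm (Fin 30))) :=
      Subgroup.subset_closure (by simp)
    have key : ∀ x : Fin 30, ∃ a b : Fin 11,
        (p2 ^ (b : ℕ)) ((p1 ^ (a : ℕ)) 0) = x := by decide
    intro x y
    obtain ⟨a, b, hab⟩ := key x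
    obtain ⟨c, d, hcd⟩ := key y
    refine ⟨(p2 ^ (d : ℕ) * p1 ^ (c : ℕ)) * (p2 ^ (b : ℕ) * p1 ^ (a : ℕ))⁻¹,
      Subgroup.mul_mem _
        (Subgroup.mul_mem _ (Subgroup.pow_mem _ h2 _) (Subgroup.pow_mem _ h1 _))
        (Subgroup.inv_mem _
          (Subgroup.mul_mem _ (Subgroup.pow_mem _ h2 _) (Subgroup.pow_mem _ h1 _))), ?_⟩
    have hx : (p2 ^ (b : ℕ) * p1 ^ (a : ℕ)) 0 = x := by
      simpa [Equiv.Perm.mul_apply] using hab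
    have hy : (p2 ^ (d : ℕ) * p1 ^ (c : ℕ)) 0 = y := by
      simpa [Equiv.Perm.mul_apply] using hcd
    rw [Equiv.Perm.mul_apply, ← hx, Equiv.Perm.inv_def, Equiv.symm_apply_apply, hy]
  · rw [orbitSizes_eq_pOrb]; decide
  · rw [orbitSizes_eq_pOrb]; decide
  · rw [orbitSizes_eq_pOrb]; decide
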